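/- Let G be a rigid group with principal series G = G_1 > G_2 > ... > G_n > G_{n+1} = 1. Then: (1) G_i ⊇ G^{(i−1)} for i = 1, ..., n+1; (2) G^{(i−1)} is not contained in G_{i+1} for i = 1, ..., n. In particular, the solvability class of G is exactly n. -/

import Mathlib

/-!
STATEMENT 11 (Lemma on solvability class): Let `G` be rigid with principal series
`G = G_1 > ... > G_{n+1} = 1`. Then (1) `G_i ⊇ G^{(i−1)}` for `i = 1, ..., n+1`;
(2) `G^{(i−1)} ⊄ G_{i+1}` for `i = 1, ..., n`. In particular, the solvability class of
`G` is exactly `n`. (Indices here are 0-based: `s i = G_{i+1}`, and `derivedSeries G i`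
is `G^{(i)}`.)
-/

open scoped commutatorElement

/-- A principal series of length `n`: `s 0 = G ≥ ... ≥ s n = 1`, each term normal in `G`,
strictly decreasing, with abelian factors `s i / s (i+1)` that are torsion-free as right
`ℤ[G / s i]`-modules (the module structure given by conjugation); the torsion-freeness is
expressed elementwise: a nonzero element of the group ring (given by representatives
`h j` of pairwise distinct cosets modulo `s i` and integer coefficients `m j`, not all zero)
applied to `c ∈ s i` lies in `s (i+1)` only if `c` does. -/
def IsPrincipalSeries {G : Type*} [Group G] {n : ℕ} (s : Fin (n + 1) → Subgroup G) : Prop :=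
  s 0 = ⊤ ∧ s (Fin.last n) = ⊥ ∧
  (∀ i, (s i).Normal) ∧
  (∀ i : Fin n, s i.succ < s i.castSucc) ∧
  (∀ i : Fin n, ∀ x ∈ s i.castSucc, ∀ y ∈ s i.castSucc, ⁅x, y⁆ ∈ s i.succ) ∧
  (∀ i : Fin n, ∀ c ∈ s i.castSucc, ∀ (k : ℕ) (h : Fin k → G) (m : Fin k → ℤ),
    (∀ j l : Fin k, j ≠ l → (h j)⁻¹ * h l ∉ s i.castSucc) →
    (∃ j, m j ≠ 0) →
    (List.ofFn fun j => ((h j)⁻¹ * c * h j) ^ m j).prod ∈ s i.succ →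
    c ∈ s i.succ)

/-- A group is `n`-rigid if it has a principal series of length `n`. -/
def IsRigid (G : Type*) [Group G] (n : ℕ) : Prop :=
  ∃ s : Fin (n + 1) → Subgroup G, IsPrincipalSeries s

/-- The family `t` of elements of `Gi` is linearly independent (in the factor `Gi/Gi1`)
over the group ring `ℤ[G/Gi]`, expressed elementwise. -/
def LinIndepMod {G : Type*} [Group G] (Gi Gi1 : Subgroup G) {k : ℕ} (t : Fin k → G) : Prop :=
  (∀ j, t j ∈ Gi) ∧
  ∀ (l : ℕ) (h : Fin k → Fin l → G) (m : Fin k → Fin l → ℤ),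
    (∀ j, ∀ p q : Fin l, p ≠ q → (h j p)⁻¹ * h j q ∉ Gi) →
    (List.ofFn fun j : Fin k =>
      (List.ofFn fun p : Fin l => ((h j p)⁻¹ * t j * h j p) ^ m j p).prod).prod ∈ Gi1 →
    ∀ j p, m j p = 0

/-- The rank of the factor `Gi/Gi1` as a `ℤ[G/Gi]`-module: the supremum of cardinalities
of linearly independent families. -/
noncomputable def rankAt {G : Type*} [Group G] (Gi Gi1 : Subgroup G) : ℕ∞ :=
  ⨆ (k : ℕ) (_ : ∃ t : Fin k → G, LinIndepMod Gi Gi1 t), (k : ℕ∞)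

/-- `r_i(G)` computed from a principal series `s`. -/
noncomputable def seriesRank {G : Type*} [Group G] {n : ℕ} (s : Fin (n + 1) → Subgroup G)
    (i : Fin n) : ℕ∞ :=
  rankAt (s i.castSucc) (s i.succ)


lemma lemA {G : Type} [Group G] {n : ℕ} {s : Fin (n + 1) → Subgroup G}
    (hs : IsPrincipalSeries s) (i : Fin n) {a g : G}
    (ha : a ∉ s i.castSucc) (hg : g ∈ s i.castSucc)
    (hmem : g⁻¹ * (a⁻¹ * g * a) ∈ s i.succ) : g ∈ s i.succ := by
  have htf := hs.2.2.2.2.2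
  refine htf i g hg 2 ![1, a] ![-1, 1] ?_ ⟨0, by norm_num⟩ ?_
  · intro j l hjl
    fin_cases j <;> fin_cases l <;>
      [exact absurd rfl hjl;
       (intro hx; exact ha (by simpa using hx));
       (intro hx; exact ha (inv_mem_iff.mp (by simpa using hx)));
       exact absurd rfl hjl]
  · have he : (List.ofFn fun j : Fin 2 => (((![1, a] : Fin 2 → G) j)⁻¹ * g * ![1, a] j) ^ (((![-1, 1] : Fin 2 → ℤ)) j)).prod
        = g⁻¹ * (a⁻¹ * g * a) := by
      simp [List.ofFn_succ, Fin.isValue]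
    rw [he]; exact hmem


theorem stmt11 {G : Type} [Group G] (n : ℕ) (s : Fin (n + 1) → Subgroup G)
    (hs : IsPrincipalSeries s) :
    (∀ i : Fin (n + 1), derivedSeries G i ≤ s i) ∧
    (∀ i : Fin n, ¬ derivedSeries G i ≤ s i.succ) ∧
    derivedSeries G n = ⊥ ∧ (∀ k : ℕ, k < n → derivedSeries G k ≠ ⊥) := by
  have hN := hs.2.2.1
  have hlt := hs.2.2.2.1
  have hab := hs.2.2.2.2.1
  -- Part 1
  have part1 : ∀ k, ∀ hk : k ≤ n, derivedSeries G k ≤ s ⟨k, Nat.lt_succ_of_le hk⟩ := by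
    intro k
    induction k with
    | zero =>
      intro hk
      have h0 : s ⟨0, Nat.lt_succ_of_le hk⟩ = ⊤ := hs.1
      rw [h0]; exact le_top
    | succ k ih =>
      intro hk
      have hk' : k ≤ n := Nat.le_of_succ_le hk
      have ihk := ih hk'
      rw [derivedSeries_succ]
      rw [Subgroup.commutator_le]
      intro x hx y hy
      exact hab ⟨k, hk⟩ x (ihk hx) y (ihk hy)
  -- Part 2 (strengthened)
  have part2 : ∀ k, ∀ hk : k < n, ∃ a, a ∈ derivedSeries G k ∧
      a ∉ s ⟨k + 1, Nat.succ_lt_succ hk⟩ := by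
    intro k
    induction k with
    | zero =>
      intro hk
      obtain ⟨x, hx, hxn⟩ := SetLike.exists_of_lt (hlt ⟨0, hk⟩)
      exact ⟨x, Subgroup.mem_top x, hxn⟩
    | succ k ih =>
      intro hk
      obtain ⟨a, haD, haS⟩ := ih (Nat.lt_of_succ_lt hk)
      set i1 : Fin n := ⟨k + 1, hk⟩ with hi1
      have haS' : a ∉ s i1.castSucc := haS
      obtain ⟨g, hg, hgn⟩ := SetLike.exists_of_lt (hlt i1)
      set h : G := g⁻¹ * (a⁻¹ * g * a) with hh
      have hhn : h ∉ s i1.succ := fun hmem => hgn (lemA hs i1 haS' hg hmem)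
      have hhS : h ∈ s i1.castSucc := by
        have := (hN i1.castSucc).conj_mem g hg a⁻¹
        rw [inv_inv] at this
        exact mul_mem (inv_mem hg) this
      have hhD : h ∈ derivedSeries G k := by
        have h1 : g⁻¹ * a⁻¹ * g ∈ derivedSeries G k := by
          have := (derivedSeries_normal G k).conj_mem a⁻¹ (inv_mem haD) g⁻¹
          rw [inv_inv] at this
          exact this
        have : (g⁻¹ * a⁻¹ * g) * a ∈ derivedSeries G k := mul_mem h1 haD
        rw [hh]
        convert this using 1
        group
      refine ⟨h⁻¹ * (a⁻¹ * h * a), ?_, ?_⟩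
      · have hb : ⁅h⁻¹, a⁻¹⁆ ∈ ⁅derivedSeries G k, derivedSeries G k⁆ :=
          Subgroup.commutator_mem_commutator (inv_mem hhD) (inv_mem haD)
        rw [derivedSeries_succ]
        convert hb using 1
        rw [commutatorElement_def]
        group
      · intro hmem
        exact hhn (lemA hs i1 haS' hhS hmem)
  refine ⟨?_, ?_, ?_, ?_⟩
  · intro i
    exact part1 i.val (Nat.lt_succ_iff.mp i.isLt)
  · intro i hle
    obtain ⟨a, haD, haS⟩ := part2 i.val i.isLt
    exact haS (hle haD)
  · refine le_antisymm ?_ bot_le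
    rw [← hs.2.1]
    exact part1 n le_rfl
  · intro k hk hbot
    obtain ⟨a, haD, haS⟩ := part2 k hk
    rw [hbot, Subgroup.mem_bot] at haD
    exact haS (haD ▸ one_mem _)
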